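/- Suppose 𝒯₁ ⊆ 𝒯₂ are E-closed families with least generating sets 𝒯'₁ and 𝒯'₂, and suppose 𝒯'₂ \ 𝒯'₁ is finite. Then 𝒯₂ = 𝒯₁ ∪ (𝒯'₂ \ 𝒯'₁). -/
import Mathlib

open Set

variable {σ : Type*}

/-- For a family 𝒯 of theories (sets of sentences) and a sentence φ,
`Tphi 𝒯 φ` is the set 𝒯_φ = {T ∈ 𝒯 | φ ∈ T}. -/
def Tphi (𝒯 : Set (Set σ)) (φ : σ) : Set (Set σ) := {T ∈ 𝒯 | φ ∈ T}

/-- E-closure relative to the ambient set `S` of all complete theories: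
`ClE S 𝒯 = 𝒯 ∪ {T ∈ S | ∀ φ ∈ T, 𝒯_φ is infinite}`. -/
def ClE (S 𝒯 : Set (Set σ)) : Set (Set σ) :=
  𝒯 ∪ {T ∈ S | ∀ φ ∈ T, (Tphi 𝒯 φ).Infinite}

/-- 𝒯 is E-closed if it equals its own E-closure. -/
def EClosed (S 𝒯 : Set (Set σ)) : Prop := ClE S 𝒯 = 𝒯

/-- `𝒯'` is a generating set for `𝒯`. -/
def Generates (S 𝒯' 𝒯 : Set (Set σ)) : Prop := 𝒯' ⊆ 𝒯 ∧ ClE S 𝒯' = 𝒯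

/-- `𝒯'` is the least generating set for `𝒯`. -/
def IsLeastGen (S 𝒯' 𝒯 : Set (Set σ)) : Prop :=
  Generates S 𝒯' 𝒯 ∧ ∀ 𝒯'', Generates S 𝒯'' 𝒯 → 𝒯' ⊆ 𝒯''

/-- `T` is an isolated point of `𝒯`: some sentence φ ∈ T has 𝒯_φ = {T}. -/
def IsolatedIn (𝒯 : Set (Set σ)) (T : Set σ) : Prop := ∃ φ ∈ T, Tphi 𝒯 φ = {T}

/-- The meet operation ∧′: E-closure of the set of isolated points of 𝒯₁ ∩ 𝒯₂. -/
def meetI (S 𝒯₁ 𝒯₂ : Set (Set σ)) : Set (Set σ) :=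
  ClE S {T ∈ 𝒯₁ ∩ 𝒯₂ | IsolatedIn (𝒯₁ ∩ 𝒯₂) T}

/-- Proposition 2.6: if 𝒯₁ ⊆ 𝒯₂ are E-closed with least generating sets 𝒯'₁, 𝒯'₂ and
𝒯'₂ \ 𝒯'₁ is finite, then 𝒯₂ = 𝒯₁ ∪ (𝒯'₂ \ 𝒯'₁). -/
theorem finite_difference_union {σ : Type*} (S 𝒯₁ 𝒯₂ 𝒯'₁ 𝒯'₂ : Set (Set σ))
    (hS : ∀ T ∈ S, T.Nonempty) (h₁S : 𝒯₁ ⊆ S) (h₂S : 𝒯₂ ⊆ S)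
    (h₁ : EClosed S 𝒯₁) (h₂ : EClosed S 𝒯₂) (h₁₂ : 𝒯₁ ⊆ 𝒯₂)
    (hg₁ : IsLeastGen S 𝒯'₁ 𝒯₁) (hg₂ : IsLeastGen S 𝒯'₂ 𝒯₂)
    (hfin : (𝒯'₂ \ 𝒯'₁).Finite) :
    𝒯₂ = 𝒯₁ ∪ (𝒯'₂ \ 𝒯'₁) := by
  apply Subset.antisymm
  · intro T hT
    rw [← hg₂.1.2] at hT
    rcases hT with h | ⟨hTS, hφ⟩
    · by_cases h1 : T ∈ 𝒯'₁
      · exact Or.inl (hg₁.1.1 h1)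
      · exact Or.inr ⟨h, h1⟩
    · left
      rw [← h₁]
      right
      refine ⟨hTS, fun φ hφT => ?_⟩
      have hinf : ((Tphi 𝒯'₂ φ) \ (𝒯'₂ \ 𝒯'₁)).Infinite := (hφ φ hφT).diff hfin
      refine hinf.mono ?_
      rintro U ⟨⟨hU2, hUφ⟩, hUd⟩
      have hU1 : U ∈ 𝒯'₁ := by
        by_contra h
        exact hUd ⟨hU2, h⟩
      exact ⟨hg₁.1.1 hU1, hUφ⟩
  · rintro T (h | h)
    · exact h₁₂ h
    · exact hg₂.1.1 h.1
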